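/- Let x_0 < x_1 < ... < x_n (n ≥ 1) be a partition, let β > 0 be a real constant, let f be continuous on [x_0, x_n], and let u be twice continuously differentiable on [x_0, x_n] with β·u''(x) = −f(x) for all x, u(x_0) = 0, and u(x_n) = 0. Suppose c_0, ..., c_n are real numbers with c_0 = c_n = 0 satisfying, for every i with 1 ≤ i ≤ n−1, β·( (c_i − c_{i−1})/(x_i − x_{i−1}) − (c_{i+1} − c_i)/(x_{i+1} − x_i) ) = ∫_{x_{i−1}}^{x_{i+1}} f(x)·φ_i(x) dx, where φ_i is the hat function at x_i. Then c_i = u(x_i) for all i. -/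
import Mathlib

open Set MeasureTheory intervalIntegral

/-- The hat (piecewise linear) basis function associated with the nodes `xm < xc < xp`:
it equals `(t−xm)/(xc−xm)` on `[xm,xc]`, `(xp−t)/(xp−xc)` on `[xc,xp]`, and `0` otherwise. -/
noncomputable def hatFun (xm xc xp : ℝ) (t : ℝ) : ℝ :=
  if t ∈ Set.Icc xm xc then (t - xm) / (xc - xm)
  else if t ∈ Set.Icc xc xp then (xp - t) / (xp - xc)
  else 0

lemma ibp_aux (x0 xn a b : ℝ) (ha : x0 ≤ a) (hb : b ≤ xn) (hab : a < b)
    (u u' u'' : ℝ → ℝ)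
    (hu' : ∀ t ∈ Set.Icc x0 xn, HasDerivWithinAt u (u' t) (Set.Icc x0 xn) t)
    (hu'' : ∀ t ∈ Set.Icc x0 xn, HasDerivWithinAt u' (u'' t) (Set.Icc x0 xn) t)
    (hu''c : ContinuousOn u'' (Set.Icc x0 xn)) (r : ℝ) :
    ∫ t in a..b, u'' t * (t - r) = (u' b * (b - r) - u b) - (u' a * (a - r) - u a) := by
  have hsub : Set.Icc a b ⊆ Set.Icc x0 xn := Set.Icc_subset_Icc ha hb
  have hu'c : ContinuousOn u' (Set.Icc x0 xn) := fun t ht => (hu'' t ht).continuousWithinAt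
  have huc : ContinuousOn u (Set.Icc x0 xn) := fun t ht => (hu' t ht).continuousWithinAt
  have hcont : ContinuousOn (fun t => u' t * (t - r) - u t) (Set.Icc a b) :=
    ((hu'c.mono hsub).mul (continuousOn_id.sub continuousOn_const)).sub (huc.mono hsub)
  have hint : IntervalIntegrable (fun t => u'' t * (t - r)) volume a b := by
    apply ContinuousOn.intervalIntegrable
    rw [Set.uIcc_of_le hab.le]
    exact (hu''c.mono hsub).mul (continuousOn_id.sub continuousOn_const)
  have key := intervalIntegral.integral_eq_sub_of_hasDeriv_right_of_le hab.le hcont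
      (fun t ht => ?_) hint
  · exact key
  · have htmem : t ∈ Set.Icc x0 xn := ⟨ha.trans ht.1.le, ht.2.le.trans hb⟩
    have hnhds : Set.Icc x0 xn ∈ nhds t :=
      Icc_mem_nhds (lt_of_le_of_lt ha ht.1) (lt_of_lt_of_le ht.2 hb)
    have h1 : HasDerivAt u (u' t) t := (hu' t htmem).hasDerivAt hnhds
    have h2 : HasDerivAt u' (u'' t) t := (hu'' t htmem).hasDerivAt hnhds
    have h3 : HasDerivAt (fun t => u' t * (t - r) - u t) (u'' t * (t - r) + u' t * 1 - u' t) t :=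
      (h2.mul ((hasDerivAt_id t).sub_const r)).sub h1
    have h4 : HasDerivAt (fun t => u' t * (t - r) - u t) (u'' t * (t - r)) t := by
      convert h3 using 1; ring
    exact h4.hasDerivWithinAt

lemma nodal_relation (x0 xn a b c : ℝ) (ha : x0 ≤ a) (hc : c ≤ xn) (hab : a < b) (hbc : b < c)
    (β : ℝ) (f u u' u'' : ℝ → ℝ)
    (hu' : ∀ t ∈ Set.Icc x0 xn, HasDerivWithinAt u (u' t) (Set.Icc x0 xn) t)
    (hu'' : ∀ t ∈ Set.Icc x0 xn, HasDerivWithinAt u' (u'' t) (Set.Icc x0 xn) t)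
    (hu''c : ContinuousOn u'' (Set.Icc x0 xn))
    (hode : ∀ t ∈ Set.Icc x0 xn, β * u'' t = -f t) :
    ∫ t in a..c, f t * hatFun a b c t
      = β * ((u b - u a) / (b - a) - (u c - u b) / (c - b)) := by
  have hb' : b ≤ xn := hbc.le.trans hc
  have ha' : x0 ≤ b := ha.trans hab.le
  have hsub1 : Set.Icc a b ⊆ Set.Icc x0 xn := Set.Icc_subset_Icc ha hb'
  have hsub2 : Set.Icc b c ⊆ Set.Icc x0 xn := Set.Icc_subset_Icc ha' hc
  have hba : b - a ≠ 0 := sub_ne_zero.mpr hab.ne'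
  have hcb : c - b ≠ 0 := sub_ne_zero.mpr hbc.ne'
  -- hatFun values on the two pieces
  have hat1 : ∀ t ∈ Set.Icc a b, hatFun a b c t = (t - a) / (b - a) := by
    intro t ht; simp [hatFun, ht]
  have hat2 : ∀ t ∈ Set.Icc b c, hatFun a b c t = (c - t) / (c - b) := by
    intro t ht
    by_cases h1 : t ∈ Set.Icc a b
    · have htb : t = b := le_antisymm h1.2 ht.1
      subst htb
      simp [hatFun, h1, div_self hba, div_self hcb]
    · simp [hatFun, h1, ht]
  -- f in terms of u''
  have hfe : ∀ t ∈ Set.Icc x0 xn, f t = -(β * u'' t) := by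
    intro t ht; have := hode t ht; linarith
  -- first piece
  have e1 : ∫ t in a..b, f t * hatFun a b c t
      = (-β / (b - a)) * ∫ t in a..b, u'' t * (t - a) := by
    rw [← intervalIntegral.integral_const_mul]
    apply intervalIntegral.integral_congr
    intro t ht
    rw [Set.uIcc_of_le hab.le] at ht
    simp only []; rw [hat1 t ht, hfe t (hsub1 ht)]; ring
  have e2 : ∫ t in b..c, f t * hatFun a b c t
      = (β / (c - b)) * ∫ t in b..c, u'' t * (t - c) := by
    rw [← intervalIntegral.integral_const_mul]
    apply intervalIntegral.integral_congr
    intro t ht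
    rw [Set.uIcc_of_le hbc.le] at ht
    simp only []; rw [hat2 t ht, hfe t (hsub2 ht)]; ring
  -- integrability of f * hat on each piece
  have hfc : ContinuousOn f (Set.Icc x0 xn) := by
    have : ContinuousOn (fun t => -(β * u'' t)) (Set.Icc x0 xn) :=
      (continuousOn_const.mul hu''c).neg
    exact this.congr fun t ht => hfe t ht
  have i1 : IntervalIntegrable (fun t => f t * hatFun a b c t) volume a b := by
    rw [intervalIntegrable_iff_integrableOn_Ioc_of_le hab.le]
    have hnice : IntegrableOn (fun t => f t * ((t - a) / (b - a))) (Set.Ioc a b) := by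
      apply (ContinuousOn.integrableOn_Icc ?_).mono_set Set.Ioc_subset_Icc_self
      exact (hfc.mono hsub1).mul ((continuousOn_id.sub continuousOn_const).div_const _)
    exact hnice.congr_fun (fun t ht => by
      rw [hat1 t (Set.Ioc_subset_Icc_self ht)]) measurableSet_Ioc
  have i2 : IntervalIntegrable (fun t => f t * hatFun a b c t) volume b c := by
    rw [intervalIntegrable_iff_integrableOn_Ioc_of_le hbc.le]
    have hnice : IntegrableOn (fun t => f t * ((c - t) / (c - b))) (Set.Ioc b c) := by
      apply (ContinuousOn.integrableOn_Icc ?_).mono_set Set.Ioc_subset_Icc_self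
      exact (hfc.mono hsub2).mul ((continuousOn_const.sub continuousOn_id).div_const _)
    exact hnice.congr_fun (fun t ht => by
      rw [hat2 t (Set.Ioc_subset_Icc_self ht)]) measurableSet_Ioc
  have hsplit : (∫ t in a..b, f t * hatFun a b c t) + (∫ t in b..c, f t * hatFun a b c t)
      = ∫ t in a..c, f t * hatFun a b c t :=
    intervalIntegral.integral_add_adjacent_intervals i1 i2
  have v1 := ibp_aux x0 xn a b ha hb' hab u u' u'' hu' hu'' hu''c a
  have v2 := ibp_aux x0 xn b c ha' hc hbc u u' u'' hu' hu'' hu''c c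
  rw [← hsplit, e1, e2, v1, v2]
  field_simp
  ring

/-- **nodal exactness.**  For the constant-coefficient problem `β u'' = −f` with
homogeneous Dirichlet conditions, the nodal values `c i` of the `P₁` Galerkin finite element
solution coincide with the values `u (x i)` of the exact solution at the mesh nodes. -/
theorem galerkin_nodal_exactness
    (n : ℕ) (hn : 1 ≤ n) (x : ℕ → ℝ) (hx : ∀ i < n, x i < x (i + 1))
    (β : ℝ) (hβ : 0 < β) (f u u' u'' : ℝ → ℝ)
    (hf : ContinuousOn f (Set.Icc (x 0) (x n)))
    (hu' : ∀ t ∈ Set.Icc (x 0) (x n), HasDerivWithinAt u (u' t) (Set.Icc (x 0) (x n)) t)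
    (hu'' : ∀ t ∈ Set.Icc (x 0) (x n), HasDerivWithinAt u' (u'' t) (Set.Icc (x 0) (x n)) t)
    (hu''c : ContinuousOn u'' (Set.Icc (x 0) (x n)))
    (hode : ∀ t ∈ Set.Icc (x 0) (x n), β * u'' t = -f t)
    (hu0 : u (x 0) = 0) (hun : u (x n) = 0)
    (c : ℕ → ℝ) (hc0 : c 0 = 0) (hcn : c n = 0)
    (hgal : ∀ i, 1 ≤ i → i ≤ n - 1 →
      β * ((c i - c (i - 1)) / (x i - x (i - 1)) - (c (i + 1) - c i) / (x (i + 1) - x i))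
        = ∫ t in (x (i - 1))..(x (i + 1)), f t * hatFun (x (i - 1)) (x i) (x (i + 1)) t) :
    ∀ i ≤ n, c i = u (x i) := by
  -- monotonicity of the mesh
  have hmono : ∀ i j : ℕ, i ≤ j → j ≤ n → x i ≤ x j := by
    intro i j hij hjn
    induction j with
    | zero => simp_all
    | succ k ih =>
      rcases Nat.lt_or_ge i (k+1) with h | h
      · exact (ih (Nat.lt_succ_iff.mp h) (Nat.le_of_succ_le hjn)).trans
          (hx k (Nat.lt_of_succ_le hjn)).le
      · have : i = k + 1 := le_antisymm hij h
        simp [this]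
  -- the difference relation: slopes of e = c - u∘x are constant
  set e : ℕ → ℝ := fun i => c i - u (x i) with he
  have hrel : ∀ i : ℕ, 1 ≤ i → i ≤ n - 1 →
      (e (i+1) - e i) / (x (i+1) - x i) = (e i - e (i-1)) / (x i - x (i-1)) := by
    intro i h1 h2
    have hin : i < n := by omega
    have hin' : i - 1 < n := by omega
    have hab : x (i-1) < x i := by
      have := hx (i-1) hin'
      rwa [Nat.sub_add_cancel h1] at this
    have hbc : x i < x (i+1) := hx i hin
    have hx0 : x 0 ≤ x (i-1) := hmono 0 (i-1) (Nat.zero_le _) (by omega)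
    have hxn : x (i+1) ≤ x n := hmono (i+1) n (by omega) le_rfl
    have hv := nodal_relation (x 0) (x n) (x (i-1)) (x i) (x (i+1)) hx0 hxn hab hbc
      β f u u' u'' hu' hu'' hu''c hode
    have hg := hgal i h1 h2
    rw [hv] at hg
    have hβ' : β ≠ 0 := hβ.ne'
    have hkey : (c i - c (i-1)) / (x i - x (i-1)) - (c (i+1) - c i) / (x (i+1) - x i)
        = (u (x i) - u (x (i-1))) / (x i - x (i-1))
          - (u (x (i+1)) - u (x i)) / (x (i+1) - x i) := by
      have := mul_left_cancel₀ hβ' hg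
      linarith [this]
    have hba : x i - x (i-1) ≠ 0 := sub_ne_zero.mpr hab.ne'
    have hcb : x (i+1) - x i ≠ 0 := sub_ne_zero.mpr hbc.ne'
    simp only [he]
    field_simp
    field_simp at hkey
    ring_nf
    ring_nf at hkey
    linarith [hkey]
  -- e i = s * (x i - x 0) where s is the common slope
  set s : ℝ := e 1 / (x 1 - x 0) with hs
  have h10 : x 0 < x 1 := hx 0 (by omega)
  have hclaim : ∀ i, i ≤ n → e i = s * (x i - x 0) := by
    intro i
    induction i using Nat.strong_induction_on with
    | _ i ih =>
      match i with
      | 0 => intro _; simp [he, hc0, hu0]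
      | 1 => intro _; rw [hs]; exact (div_mul_cancel₀ (e 1) (sub_ne_zero.mpr h10.ne')).symm
      | (k+2) =>
        intro hkn
        have h1 : 1 ≤ k + 1 := by omega
        have h2 : k + 1 ≤ n - 1 := by omega
        have hr := hrel (k+1) h1 h2
        have ek : e k = s * (x k - x 0) := ih k (by omega) (by omega)
        have ek1 : e (k+1) = s * (x (k+1) - x 0) := ih (k+1) (by omega) (by omega)
        have hab : x k < x (k+1) := hx k (by omega)
        have hbc : x (k+1) < x (k+2) := hx (k+1) (by omega)
        have hba : x (k+1) - x k ≠ 0 := sub_ne_zero.mpr hab.ne'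
        have hcb : x (k+2) - x (k+1) ≠ 0 := sub_ne_zero.mpr hbc.ne'
        simp only [Nat.add_sub_cancel] at hr
        rw [ek, ek1] at hr
        have hrhs : (s * (x (k+1) - x 0) - s * (x k - x 0)) / (x (k+1) - x k) = s := by
          field_simp; ring
        rw [hrhs] at hr
        have : e (k+1+1) - e (k+1) = s * (x (k+1+1) - x (k+1)) := by
          field_simp at hr; linarith [hr]
        rw [ek1] at this
        have : e (k+2) = s * (x (k+2) - x 0) := by
          have h' : e (k+1+1) = s * (x (k+1+1) - x (k+1)) + s * (x (k+1) - x 0) := by linarith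
          rw [h']; ring
        exact this
  -- conclude s = 0
  have hen : e n = 0 := by simp [he, hcn, hun]
  have hn0 : x 0 < x n := lt_of_lt_of_le h10 (hmono 1 n hn le_rfl)
  have hs0 : s = 0 := by
    have := hclaim n le_rfl
    rw [hen] at this
    have hne : x n - x 0 ≠ 0 := sub_ne_zero.mpr hn0.ne'
    rcases mul_eq_zero.mp this.symm with h | h
    · exact h
    · exact absurd h hne
  intro i hi
  have := hclaim i hi
  rw [hs0] at this
  simp only [he] at this
  linarith [this]
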